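/- Let a, b, c be positive integers with gcd(a,b,c) = 1 and a | lcm(b,c), and set l₁ = lcm(a,b), l₂ = lcm(a,c). Then the Sylvester number satisfies n(a,b,c) = (1/2)(l₁ + l₂ − (a + b + c) + 1). -/

import Mathlib

private lemma sylv_filter_card (a m : ℕ) (ha : 0 < a) (hm : m = 0 ∨ m % a ≠ 0) :
    ((Finset.Ioo 0 m).filter (fun n => n % a = m % a)).card = m / a := by
  rcases hm with rfl | hm
  · simp
  · have himg : (Finset.Ioo 0 m).filter (fun n => n % a = m % a)
        = (Finset.range (m / a)).image (fun j => m % a + a * j) := by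
      ext n
      simp only [Finset.mem_filter, Finset.mem_Ioo, Finset.mem_image, Finset.mem_range]
      constructor
      · rintro ⟨⟨hn0, hnm⟩, hmod⟩
        refine ⟨n / a, ?_, ?_⟩
        · have h1 : a * (n / a) + n % a = n := Nat.div_add_mod n a
          have h2 : a * (m / a) + m % a = m := Nat.div_add_mod m a
          have hlt : a * (n / a) < a * (m / a) := by omega
          exact Nat.lt_of_mul_lt_mul_left hlt
        · rw [← hmod]
          exact Nat.mod_add_div n a
      · rintro ⟨j, hj, rfl⟩
        have hma : m % a < a := Nat.mod_lt _ ha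
        have h2 : a * (m / a) + m % a = m := Nat.div_add_mod m a
        have hle : a * (j + 1) ≤ a * (m / a) := Nat.mul_le_mul_left _ hj
        refine ⟨⟨by omega, by nlinarith⟩, ?_⟩
        simp [Nat.add_mul_mod_self_left, Nat.mod_mod_of_dvd]
    rw [himg, Finset.card_image_of_injective _ ?_, Finset.card_range]
    intro i j hij
    simp only at hij
    have : a * i = a * j := by omega
    exact Nat.eq_of_mul_eq_mul_left ha this

/-- for `gcd(a,b,c) = 1` with `a ∣ lcm(b,c)`, the Sylvester number is
`(1/2)(lcm(a,b) + lcm(a,c) - (a + b + c) + 1)`. -/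
theorem sylvester_number_three_variables
    (a b c : ℕ) (ha : 0 < a) (hb : 0 < b) (hc : 0 < c)
    (hgcd : Nat.gcd a (Nat.gcd b c) = 1) (hdvd : a ∣ Nat.lcm b c) :
    (({n : ℕ | 0 < n ∧ ¬∃ x y z : ℕ, n = a * x + b * y + c * z}).ncard : ℚ) =
      (1 / 2) * ((Nat.lcm a b : ℚ) + (Nat.lcm a c : ℚ) - ((a : ℚ) + b + c) + 1) := by
  set d1 := Nat.gcd a b with hd1def
  set d2 := Nat.gcd a c with hd2def
  have hd1b : d1 ∣ b := Nat.gcd_dvd_right a b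
  have hd1a : d1 ∣ a := Nat.gcd_dvd_left a b
  have hd2c : d2 ∣ c := Nat.gcd_dvd_right a c
  have hd2a : d2 ∣ a := Nat.gcd_dvd_left a c
  have hd1pos : 0 < d1 := Nat.gcd_pos_of_pos_left b ha
  have hd2pos : 0 < d2 := Nat.gcd_pos_of_pos_left c ha
  have hcop : Nat.gcd d1 d2 = 1 := by
    refine Nat.dvd_one.mp ?_
    rw [← hgcd]
    exact Nat.dvd_gcd ((Nat.gcd_dvd_left d1 d2).trans hd1a)
      (Nat.dvd_gcd ((Nat.gcd_dvd_left d1 d2).trans hd1b)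
        ((Nat.gcd_dvd_right d1 d2).trans hd2c))
  have ha12 : a = d1 * d2 := by
    have h1 : d1 * d2 ∣ a := Nat.Coprime.mul_dvd_of_dvd_of_dvd hcop hd1a hd2a
    have h2 : a ∣ b * c := hdvd.trans (Nat.lcm_dvd (dvd_mul_right b c) (dvd_mul_left c b))
    have h3 : a ∣ d1 * d2 := (Nat.dvd_gcd dvd_rfl h2).trans (Nat.gcd_mul_right_dvd_mul_gcd a b c)
    exact Nat.dvd_antisymm h3 h1
  -- coprimality facts for cancellation
  have hcopd1c : Nat.gcd d1 c = 1 := by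
    refine Nat.dvd_one.mp ?_
    rw [← hcop]
    exact Nat.dvd_gcd (Nat.gcd_dvd_left d1 c)
      (Nat.dvd_gcd ((Nat.gcd_dvd_left d1 c).trans hd1a) (Nat.gcd_dvd_right d1 c))
  have hcopd2b : Nat.gcd d2 b = 1 := by
    refine Nat.dvd_one.mp ?_
    rw [← hcop]
    exact Nat.dvd_gcd
      (Nat.dvd_gcd ((Nat.gcd_dvd_left d2 b).trans hd2a) (Nat.gcd_dvd_right d2 b))
      (Nat.gcd_dvd_left d2 b)
  -- lcm values
  have hlcmab : Nat.lcm a b = d2 * b := by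
    have h := Nat.gcd_mul_lcm a b
    have h2 : d1 * (d2 * b) = a * b := by rw [ha12]; ring
    exact Nat.eq_of_mul_eq_mul_left hd1pos (by rw [← hd1def] at h; rw [h2, ← h])
  have hlcmac : Nat.lcm a c = d1 * c := by
    have h := Nat.gcd_mul_lcm a c
    have h2 : d2 * (d1 * c) = a * c := by rw [ha12]; ring
    exact Nat.eq_of_mul_eq_mul_left hd2pos (by rw [← hd2def] at h; rw [h2, ← h])
  -- normal form for representations
  have hrep_iff : ∀ n : ℕ, (∃ x y z : ℕ, n = a * x + b * y + c * z) ↔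
      ∃ x y z : ℕ, y < d2 ∧ z < d1 ∧ n = a * x + b * y + c * z := by
    intro n
    constructor
    · rintro ⟨x, y, z, rfl⟩
      refine ⟨x + (b / d1) * (y / d2) + (c / d2) * (z / d1), y % d2, z % d1,
        Nat.mod_lt _ hd2pos, Nat.mod_lt _ hd1pos, ?_⟩
      have e1 : a * (b / d1) = b * d2 := by
        rw [ha12, mul_comm d1 d2, mul_assoc, Nat.mul_div_cancel' hd1b, mul_comm]
      have e2 : a * (c / d2) = c * d1 := by
        rw [ha12, mul_assoc, Nat.mul_div_cancel' hd2c, mul_comm]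
      have e3 : d2 * (y / d2) + y % d2 = y := Nat.div_add_mod y d2
      have e4 : d1 * (z / d1) + z % d1 = z := Nat.div_add_mod z d1
      zify at e1 e2 e3 e4 ⊢
      linear_combination (-((y : ℤ) / (d2 : ℤ))) * e1 - ((z : ℤ) / (d1 : ℤ)) * e2
        + (b : ℤ) * e3.symm + (c : ℤ) * e4.symm
    · rintro ⟨x, y, z, _, _, rfl⟩
      exact ⟨x, y, z, rfl⟩
  -- injectivity of residues
  have hinj : ∀ y1 z1 y2 z2 : ℕ, y1 < d2 → z1 < d1 → y2 < d2 → z2 < d1 →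
      (b * y1 + c * z1) % a = (b * y2 + c * z2) % a → y1 = y2 ∧ z1 = z2 := by
    intro y1 z1 y2 z2 hy1 hz1 hy2 hz2 h
    have hmod : b * y1 + c * z1 ≡ b * y2 + c * z2 [MOD a] := h
    have hz : z1 = z2 := by
      have h1 : b * y1 + c * z1 ≡ b * y2 + c * z2 [MOD d1] := hmod.of_dvd hd1a
      have hb1 : b * y1 ≡ b * y2 [MOD d1] :=
        (Nat.modEq_zero_iff_dvd.mpr (hd1b.mul_right y1)).trans
          (Nat.modEq_zero_iff_dvd.mpr (hd1b.mul_right y2)).symm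
      have hc1 : c * z1 ≡ c * z2 [MOD d1] := Nat.ModEq.add_left_cancel hb1 h1
      have hz' : z1 ≡ z2 [MOD d1] := Nat.ModEq.cancel_left_of_coprime hcopd1c hc1
      have : z1 % d1 = z2 % d1 := hz'
      rwa [Nat.mod_eq_of_lt hz1, Nat.mod_eq_of_lt hz2] at this
    have hy : y1 = y2 := by
      have h1 : b * y1 + c * z1 ≡ b * y2 + c * z2 [MOD d2] := hmod.of_dvd hd2a
      have hc1 : c * z1 ≡ c * z2 [MOD d2] :=
        (Nat.modEq_zero_iff_dvd.mpr (hd2c.mul_right z1)).trans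
          (Nat.modEq_zero_iff_dvd.mpr (hd2c.mul_right z2)).symm
      have hb1 : b * y1 ≡ b * y2 [MOD d2] := Nat.ModEq.add_right_cancel hc1 h1
      have hy' : y1 ≡ y2 [MOD d2] := Nat.ModEq.cancel_left_of_coprime hcopd2b hb1
      have : y1 % d2 = y2 % d2 := hy'
      rwa [Nat.mod_eq_of_lt hy1, Nat.mod_eq_of_lt hy2] at this
    exact ⟨hy, hz⟩
  -- the index finset of pairs
  set P : Finset (ℕ × ℕ) := Finset.range d2 ×ˢ Finset.range d1 with hPdef
  set f : ℕ × ℕ → ℕ := fun p => b * p.1 + c * p.2 with hfdef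
  have hPmem : ∀ p : ℕ × ℕ, p ∈ P ↔ p.1 < d2 ∧ p.2 < d1 := by
    intro p; simp [hPdef, Finset.mem_product]
  -- the residue map is injective on P
  have hinjP : ∀ p ∈ P, ∀ q ∈ P, f p % a = f q % a → p = q := by
    intro p hp q hq hpq
    rw [hPmem] at hp hq
    obtain ⟨h1, h2⟩ := hinj p.1 p.2 q.1 q.2 hp.1 hp.2 hq.1 hq.2 hpq
    exact Prod.ext h1 h2
  -- the image of residues is all of range a
  have himage : P.image (fun p => f p % a) = Finset.range a := by
    apply Finset.eq_of_subset_of_card_le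
    · intro r hr
      simp only [Finset.mem_image] at hr
      obtain ⟨p, _, rfl⟩ := hr
      exact Finset.mem_range.mpr (Nat.mod_lt _ ha)
    · rw [Finset.card_range, Finset.card_image_of_injOn, hPdef,
        Finset.card_product, Finset.card_range, Finset.card_range, ha12,
        mul_comm]
      intro p hp q hq hpq
      exact hinjP p hp q hq hpq
  -- characterization of representability
  have hchar : ∀ n : ℕ, ∀ p ∈ P, n % a = f p % a →
      ((∃ x y z : ℕ, n = a * x + b * y + c * z) ↔ f p ≤ n) := by
    intro n p hp hres
    rw [hPmem] at hp
    constructor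
    · intro hrep
      obtain ⟨x, y, z, hy, hz, rfl⟩ := (hrep_iff _).mp hrep
      have : (a * x + b * y + c * z) % a = (b * y + c * z) % a := by
        rw [add_assoc, Nat.mul_add_mod]
      rw [this] at hres
      simp only [hfdef] at hres
      obtain ⟨h1, h2⟩ := hinj y z p.1 p.2 hy hz hp.1 hp.2 hres
      simp only [hfdef, ← h1, ← h2]
      rw [add_assoc]
      exact Nat.le_add_left _ _
    · intro hle
      have : f p ≡ n [MOD a] := hres.symm
      have hdv : a ∣ n - f p := (Nat.modEq_iff_dvd' hle).mp this
      obtain ⟨k, hk⟩ := hdv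
      refine ⟨k, p.1, p.2, ?_⟩
      have hn : n = a * k + f p := by omega
      rw [add_assoc, hn]
  -- for p in P, f p = 0 or ¬ a ∣ f p
  have hfp0 : ∀ p ∈ P, f p = 0 ∨ f p % a ≠ 0 := by
    intro p hp
    by_cases h0 : f p % a = 0
    · left
      have h00 : ((0:ℕ), (0:ℕ)) ∈ P := by rw [hPmem]; exact ⟨hd2pos, hd1pos⟩
      have : f ((0:ℕ), (0:ℕ)) % a = 0 := by simp [hfdef]
      have := hinjP p hp ((0:ℕ),(0:ℕ)) h00 (by rw [h0, this])
      rw [this]; simp [hfdef]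
    · right; exact h0
  -- the non-representable set as a finset
  set NRfin : Finset ℕ := P.biUnion
    (fun p => (Finset.Ioo 0 (f p)).filter (fun n => n % a = f p % a)) with hNRdef
  have hmemNR : ∀ n : ℕ, n ∈ NRfin ↔
      (0 < n ∧ ¬∃ x y z : ℕ, n = a * x + b * y + c * z) := by
    intro n
    rw [hNRdef, Finset.mem_biUnion]
    constructor
    · rintro ⟨p, hp, hn⟩
      simp only [Finset.mem_filter, Finset.mem_Ioo] at hn
      obtain ⟨⟨hn0, hnm⟩, hres⟩ := hn
      refine ⟨hn0, fun hrep => ?_⟩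
      have := (hchar n p hp hres).mp hrep
      omega
    · rintro ⟨hn0, hnrep⟩
      have : n % a ∈ Finset.range a := Finset.mem_range.mpr (Nat.mod_lt _ ha)
      rw [← himage, Finset.mem_image] at this
      obtain ⟨p, hp, hres⟩ := this
      refine ⟨p, hp, ?_⟩
      simp only [Finset.mem_filter, Finset.mem_Ioo]
      have hlt : ¬ (f p ≤ n) := fun hle => hnrep ((hchar n p hp hres.symm).mpr hle)
      exact ⟨⟨hn0, by omega⟩, hres.symm⟩
  have hset : {n : ℕ | 0 < n ∧ ¬∃ x y z : ℕ, n = a * x + b * y + c * z} = ↑NRfin := by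
    ext n
    simp only [Set.mem_setOf_eq, Finset.coe_sort_coe, Finset.mem_coe, hmemNR]
  -- cardinality via disjoint union
  have hdisj : ∀ p ∈ P, ∀ q ∈ P, p ≠ q →
      Disjoint ((Finset.Ioo 0 (f p)).filter (fun n => n % a = f p % a))
        ((Finset.Ioo 0 (f q)).filter (fun n => n % a = f q % a)) := by
    intro p hp q hq hpq
    rw [Finset.disjoint_left]
    intro n hn1 hn2
    simp only [Finset.mem_filter, Finset.mem_Ioo] at hn1 hn2
    exact hpq (hinjP p hp q hq (by rw [← hn1.2, hn2.2]))
  have hcard : NRfin.card = ∑ p ∈ P, f p / a := by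
    rw [hNRdef, Finset.card_biUnion hdisj]
    refine Finset.sum_congr rfl fun p hp => ?_
    exact sylv_filter_card a (f p) ha (hfp0 p hp)
  -- sums
  set Q : ℕ := ∑ p ∈ P, f p / a with hQdef
  set M : ℕ := ∑ p ∈ P, f p with hMdef
  set R : ℕ := ∑ p ∈ P, f p % a with hRdef
  have hQRM : a * Q + R = M := by
    rw [hQdef, hRdef, hMdef, Finset.mul_sum, ← Finset.sum_add_distrib]
    exact Finset.sum_congr rfl fun p _ => Nat.div_add_mod (f p) a
  have hR : 2 * R = a * (a - 1) := by
    have h1 : R = ∑ r ∈ Finset.range a, r := by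
      rw [← himage, Finset.sum_image hinjP, hRdef]
    rw [h1, mul_comm]
    exact Finset.sum_range_id_mul_two a
  have hM : 2 * M = a * (b * (d2 - 1) + c * (d1 - 1)) := by
    have h1 : M = d1 * b * (∑ y ∈ Finset.range d2, y)
        + d2 * c * (∑ z ∈ Finset.range d1, z) := by
      rw [hMdef, hPdef, Finset.sum_product]
      simp only [hfdef]
      rw [Finset.sum_congr rfl (fun y _ => by
        rw [Finset.sum_add_distrib, Finset.sum_const, Finset.card_range,
          ← Finset.mul_sum, smul_eq_mul])]
      rw [Finset.sum_add_distrib, Finset.sum_const, Finset.card_range,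
        smul_eq_mul, ← Finset.mul_sum, ← Finset.mul_sum]
      ring
    have h2 : (∑ y ∈ Finset.range d2, y) * 2 = d2 * (d2 - 1) :=
      Finset.sum_range_id_mul_two d2
    have h3 : (∑ z ∈ Finset.range d1, z) * 2 = d1 * (d1 - 1) :=
      Finset.sum_range_id_mul_two d1
    obtain ⟨t1, ht1⟩ : ∃ t, d1 = t + 1 := ⟨d1 - 1, by omega⟩
    obtain ⟨t2, ht2⟩ : ∃ t, d2 = t + 1 := ⟨d2 - 1, by omega⟩
    rw [ht1, ht2] at h1
    rw [ht2] at h2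
    rw [ht1] at h3
    rw [ha12, ht1, ht2]
    simp only [Nat.add_sub_cancel] at h2 h3 ⊢
    zify at h1 h2 h3 ⊢
    linear_combination 2 * h1 + ((t1 : ℤ) + 1) * b * h2 + ((t2 : ℤ) + 1) * c * h3
  -- final arithmetic in ℚ
  rw [hset, Set.ncard_coe_finset, hcard, hlcmab, hlcmac]
  have haQ : (a : ℚ) ≠ 0 := Nat.cast_ne_zero.mpr (by omega)
  have e1 : (a : ℚ) * Q + R = M := by exact_mod_cast hQRM
  have e2 : (2 : ℚ) * R = a * (a - 1) := by
    have := hR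
    zify [ha] at this
    exact_mod_cast this
  have e3 : (2 : ℚ) * M = a * (b * (d2 - 1) + c * (d1 - 1)) := by
    have := hM
    zify [hd1pos, hd2pos] at this
    exact_mod_cast this
  have e4 : (2 : ℚ) * a * Q = a * (b * d2 + c * d1 - a - b - c + 1) := by
    linear_combination 2 * e1 + e3 - e2
  have e5 : (2 : ℚ) * Q = b * d2 + c * d1 - a - b - c + 1 := by
    apply mul_left_cancel₀ haQ
    linear_combination e4
  push_cast
  linarith [e5]
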